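/- Let I be a (finite or infinite) integer interval and let W be a walk indexed by I with increments in A. Then Z = WC(W) is a coalescent-walk process on I; in particular, for all t ≤ t' in I and all k ∈ I with k ≥ t', if Z^{(t)}_k ≥ Z^{(t')}_k then Z^{(t)}_{k'} ≥ Z^{(t')}_{k'} for every k' ∈ I with k' ≥ k, and if Z^{(t)}_k ≤ Z^{(t')}_k then Z^{(t)}_{k'} ≤ Z^{(t')}_{k'} for every k' ∈ I with k' ≥ k. -/

import Mathlib

/-- The step set `A = {(1,-1)} ∪ {(-i,j) : i,j ≥ 0}`. -/
def stepSet : Set (ℤ × ℤ) := {d | d = (1, -1) ∨ (d.1 ≤ 0 ∧ 0 ≤ d.2)}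

/-- One step of the coalescent walk: given the walk increment `d ∈ A` and the current
value `z` of a trajectory, the next value of the trajectory. -/
def zstep (d : ℤ × ℤ) (z : ℤ) : ℤ :=
  if d = (1, -1) then z - 1
  else if 0 ≤ z then z + d.2
  else if z < d.1 then z - d.1
  else d.2

/-- `W` is a walk on the integer interval `I` with increments in `A`. -/
def isWalkOn (I : Set ℤ) (W : ℤ → ℤ × ℤ) : Prop :=
  ∀ ℓ, ℓ ∈ I → ℓ + 1 ∈ I → W (ℓ + 1) - W ℓ ∈ stepSet

/-- `Z` satisfies the defining recurrence of the coalescent-walk process `WC(W)` driven by `W`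
on the interval `I`: `Z t s` is the value `Z^{(t)}_s` of the trajectory started at time `t`. -/
def isWCOn (I : Set ℤ) (W : ℤ → ℤ × ℤ) (Z : ℤ → ℤ → ℤ) : Prop :=
  (∀ t ∈ I, Z t t = 0) ∧
  ∀ t ∈ I, ∀ ℓ ∈ I, t ≤ ℓ → ℓ + 1 ∈ I →
    Z t (ℓ + 1) = zstep (W (ℓ + 1) - W ℓ) (Z t ℓ)

/-- `Z` is a coalescent-walk process on the interval `I`. -/
def isCoalescentOn (I : Set ℤ) (Z : ℤ → ℤ → ℤ) : Prop :=
  (∀ t ∈ I, Z t t = 0) ∧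
  ∀ t ∈ I, ∀ t' ∈ I, t ≤ t' → ∀ k ∈ I, t' ≤ k →
    ((Z t' k ≤ Z t k → ∀ k' ∈ I, k ≤ k' → Z t' k' ≤ Z t k') ∧
     (Z t k ≤ Z t' k → ∀ k' ∈ I, k ≤ k' → Z t k' ≤ Z t' k'))

lemma zstep_mono {d : ℤ × ℤ} (hd : d ∈ stepSet) {z1 z2 : ℤ} (h : z1 ≤ z2) :
    zstep d z1 ≤ zstep d z2 := by
  rcases hd with h1 | ⟨h1, h2⟩
  · simp [zstep, h1]; omega
  · unfold zstep
    by_cases hd1 : d = (1, -1)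
    · simp [hd1]; omega
    · simp only [if_neg hd1]
      split_ifs <;> omega

lemma step_order (I : Set ℤ) (hI : I.OrdConnected)
    (W : ℤ → ℤ × ℤ) (hW : isWalkOn I W)
    (Z : ℤ → ℤ → ℤ) (hZ : isWCOn I W Z)
    {t t' k : ℤ} (ht : t ∈ I) (ht' : t' ∈ I) (hk : k ∈ I)
    (htk : t ≤ k) (ht'k : t' ≤ k)
    (hle : Z t k ≤ Z t' k) :
    ∀ k', k ≤ k' → k' ∈ I → Z t k' ≤ Z t' k' := by
  intro k' hkk'
  refine Int.le_induction (motive := fun n _ => n ∈ I → Z t n ≤ Z t' n) ?_ ?_ k' hkk'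
  · intro _; exact hle
  · intro ℓ hℓ ih hℓ1I
    have hℓI : ℓ ∈ I := hI.out hk hℓ1I ⟨hℓ, by omega⟩
    have h1 := hZ.2 t ht ℓ hℓI (by omega) hℓ1I
    have h2 := hZ.2 t' ht' ℓ hℓI (by omega) hℓ1I
    rw [h1, h2]
    exact zstep_mono (hW ℓ hℓI hℓ1I) (ih hℓI)

/-- If `W` is a walk with increments in `A` on a (finite or infinite) integer interval `I`,
then `Z = WC(W)` is a coalescent-walk process on `I`: trajectories, once weakly ordered at some
time, stay in that order at all later times. -/
theorem wc_isCoalescent (I : Set ℤ) (hI : I.OrdConnected)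
    (W : ℤ → ℤ × ℤ) (hW : isWalkOn I W)
    (Z : ℤ → ℤ → ℤ) (hZ : isWCOn I W Z) :
    isCoalescentOn I Z := by
  refine ⟨hZ.1, fun t ht t' ht' htt' k hk ht'k => ⟨?_, ?_⟩⟩
  · intro hle k' hk' hkk'
    exact step_order I hI W hW Z hZ ht' ht hk ht'k (htt'.trans ht'k) hle k' hkk' hk'
  · intro hle k' hk' hkk'
    exact step_order I hI W hW Z hZ ht ht' hk (htt'.trans ht'k) ht'k hle k' hkk' hk'
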